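/- arXiv:1504.02679 — 2 statements merged into one kernel-verified Lean document; each statement's English description precedes it below -/
import Mathlib

section
/- Every element (a,f) of Ĝ²(n) factors uniquely as (a,f) = (b,g)·(I,h) where (b,g) ∈ G²(n) (i.e. g is symmetric) and h is antisymmetric; explicitly b = a, g = f_s, and h = a⁻¹ ∘ f_a. -/
abbrev V (n : ℕ) : Type := Fin n → ℝ

/-- Bilinear maps `ℝ^n × ℝ^n → ℝ^n`. -/
abbrev L2 (n : ℕ) := V n →ₗ[ℝ] V n →ₗ[ℝ] V n

/-- `GL(n,ℝ)`, realized as the invertible linear endomorphisms of `ℝ^n`. -/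
abbrev GLn (n : ℕ) := (V n →ₗ[ℝ] V n)ˣ

/-- The multiplication `(a,f)(a',f') = (a·a', a ∘ f' + f(a',a'))` of `Ĝ²(n)`. -/
noncomputable def gmul {n : ℕ} (p q : GLn n × L2 n) : GLn n × L2 n :=
  (p.1 * q.1,
    q.2.compr₂ (p.1 : V n →ₗ[ℝ] V n) +
      p.2.compl₁₂ (q.1 : V n →ₗ[ℝ] V n) (q.1 : V n →ₗ[ℝ] V n))

/-- The symmetric part `f_s = (f + fᵗ)/2`. -/
noncomputable def symPart {n : ℕ} (f : L2 n) : L2 n := (1/2 : ℝ) • (f + f.flip)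

/-- The antisymmetric part `f_a = (f - fᵗ)/2`. -/
noncomputable def asymPart {n : ℕ} (f : L2 n) : L2 n := (1/2 : ℝ) • (f - f.flip)

/-- every `(a,f) ∈ Ĝ²(n)` factors uniquely as `(a,f) = (b,g)·(I,h)` with `g`
symmetric and `h` antisymmetric; explicitly `b = a`, `g = f_s` and `h = a⁻¹ ∘ f_a`. -/
theorem Ghat_factorization (n : ℕ) (a : GLn n) (f : L2 n) :
    gmul (a, symPart f) ((1 : GLn n), (asymPart f).compr₂ ((a⁻¹ : GLn n) : V n →ₗ[ℝ] V n))
      = (a, f) ∧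
    ∀ (b : GLn n) (g h : L2 n), (∀ u v, g u v = g v u) → (∀ u v, h u v = - h v u) →
      gmul (b, g) ((1 : GLn n), h) = (a, f) →
      b = a ∧ g = symPart f ∧ h = (asymPart f).compr₂ ((a⁻¹ : GLn n) : V n →ₗ[ℝ] V n) := by
  have key : ∀ x, (a : V n →ₗ[ℝ] V n) (((a⁻¹ : GLn n) : V n →ₗ[ℝ] V n) x) = x := by
    intro x
    rw [← Module.End.mul_apply, ← Units.val_mul, mul_inv_cancel, Units.val_one,
      Module.End.one_apply]
  have key' : ∀ x, ((a⁻¹ : GLn n) : V n →ₗ[ℝ] V n) ((a : V n →ₗ[ℝ] V n) x) = x := by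
    intro x
    rw [← Module.End.mul_apply, ← Units.val_mul, inv_mul_cancel, Units.val_one,
      Module.End.one_apply]
  constructor
  · refine Prod.ext (mul_one a) ?_
    refine LinearMap.ext fun u => LinearMap.ext fun v => funext fun i => ?_
    simp only [gmul, symPart, asymPart, LinearMap.add_apply, LinearMap.compr₂_apply,
      LinearMap.compl₁₂_apply, LinearMap.smul_apply, LinearMap.sub_apply,
      LinearMap.flip_apply, Units.val_one, Module.End.one_apply, map_smul, map_sub, key]
    simp only [Pi.add_apply, Pi.smul_apply, Pi.sub_apply, smul_eq_mul]
    ring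
  · intro b g h hg hh heq
    have hb : b = a := by
      have := congrArg Prod.fst heq
      simpa [gmul] using this
    subst hb
    have hf : ∀ u v, f u v = (b : V n →ₗ[ℝ] V n) (h u v) + g u v := by
      have h2 := congrArg Prod.snd heq
      simp only [gmul, Units.val_one, LinearMap.compl₁₂_apply] at h2
      intro u v
      have := congrArg (fun m : L2 n => m u v) h2
      simpa [LinearMap.compr₂_apply] using this.symm
    have hneg : ∀ u v, (b : V n →ₗ[ℝ] V n) (h v u) = - (b : V n →ₗ[ℝ] V n) (h u v) := by
      intro u v
      rw [hh v u, map_neg]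
    refine ⟨rfl, ?_, ?_⟩
    · refine LinearMap.ext fun u => LinearMap.ext fun v => funext fun i => ?_
      simp only [symPart, LinearMap.smul_apply, LinearMap.add_apply, LinearMap.flip_apply,
        Pi.smul_apply, Pi.add_apply, smul_eq_mul]
      rw [hf u v, hf v u, hneg u v, hg u v]
      simp only [Pi.add_apply, Pi.neg_apply]
      ring
    · refine LinearMap.ext fun u => LinearMap.ext fun v => ?_
      have hasym : asymPart f u v = (b : V n →ₗ[ℝ] V n) (h u v) := by
        have : asymPart f u v = (1/2 : ℝ) • (f u v - f v u) := by
          simp [asymPart, smul_sub]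
        rw [this, hf u v, hf v u, hneg u v, hg u v]
        funext i
        simp only [Pi.smul_apply, Pi.sub_apply, Pi.add_apply, Pi.neg_apply, smul_eq_mul]
        ring
      simp only [LinearMap.compr₂_apply, hasym, key']
end

section
/- The set A₂(n) of elements (I,h) ∈ Ĝ²(n) with h antisymmetric bilinear is a normal subgroup of Ĝ²(n). -/
/-- The candidate inverse `(a⁻¹, -a⁻¹ ∘ f(a⁻¹,a⁻¹))` of `(a,f)`. -/
noncomputable def ginv {n : ℕ} (p : GLn n × L2 n) : GLn n × L2 n :=
  (p.1⁻¹,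
    -((p.2.compl₁₂ (p.1⁻¹ : GLn n) (p.1⁻¹ : GLn n)).compr₂ ((p.1⁻¹ : GLn n) : V n →ₗ[ℝ] V n)))

/-- `A₂(n)`: the set of elements `(I,h)` of `Ĝ²(n)` with `h` antisymmetric. -/
def A2set (n : ℕ) : Set (GLn n × L2 n) :=
  {p | p.1 = 1 ∧ ∀ u v, p.2 u v = - p.2 v u}

/-- `A₂(n)` is a normal subgroup of `Ĝ²(n)`. -/
theorem A2_normal_subgroup (n : ℕ) :
    ((1 : GLn n), (0 : L2 n)) ∈ A2set n ∧
    (∀ p q, p ∈ A2set n → q ∈ A2set n → gmul p q ∈ A2set n) ∧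
    (∀ p ∈ A2set n, ∃ q ∈ A2set n,
      gmul p q = ((1 : GLn n), (0 : L2 n)) ∧ gmul q p = ((1 : GLn n), (0 : L2 n))) ∧
    (∀ p : GLn n × L2 n, ∀ s ∈ A2set n, gmul (gmul p s) (ginv p) ∈ A2set n) := by

  constructor
  · exact ⟨rfl, fun u v => by simp⟩
  refine ⟨?_, ?_, ?_⟩
  · rintro p q ⟨hp1, hp2⟩ ⟨hq1, hq2⟩
    refine ⟨by simp [gmul, hp1, hq1], fun u v => ?_⟩
    simp only [gmul, hp1, hq1, LinearMap.add_apply, LinearMap.compr₂_apply,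
      LinearMap.compl₁₂_apply, Units.val_one, Module.End.one_apply]
    rw [hp2 u v, hq2 u v]; ring
  · rintro p ⟨hp1, hp2⟩
    refine ⟨(1, -p.2), ⟨rfl, fun u v => by simp [hp2 u v]⟩, ?_, ?_⟩ <;>
    · refine Prod.ext (by simp [gmul, hp1]) ?_
      ext u v
      simp [gmul, hp1]
  · rintro p s ⟨hs1, hs2⟩
    have hai : ∀ x, (p.1 : V n →ₗ[ℝ] V n) (((p.1⁻¹ : GLn n) : V n →ₗ[ℝ] V n) x) = x := fun x =>
      LinearMap.congr_fun (p.1.mul_inv) x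
    refine ⟨by simp [gmul, ginv, hs1, mul_assoc], fun u v => ?_⟩
    simp only [gmul, ginv, hs1, LinearMap.add_apply, LinearMap.compr₂_apply,
      LinearMap.compl₁₂_apply, LinearMap.neg_apply, map_add, map_neg, hai,
      Units.val_one, Module.End.one_apply]
    rw [hs2 (((p.1⁻¹ : GLn n) : V n →ₗ[ℝ] V n) u) (((p.1⁻¹ : GLn n) : V n →ₗ[ℝ] V n) v)]
    simp only [mul_one, map_neg, hai]
    ring
end
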